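/- arXiv:1809.03607 — 3 statements merged into one kernel-verified Lean document; each statement's English description precedes it below -/
import Mathlib

section
/- Let x ∈ Γ with g C²-smooth around x, let x* ∈ ℝⁿ, let λ ∈ Λ(x, x*), and let u ∈ K_Γ(x, x*). Then ⟨H(x, λ)u, u⟩ ≥ 0. -/
/- Common setting for tilt stability in second-order cone programming (SOCP):
   minimize f(x) subject to g(x) = (g₀(x), g_r(x)) ∈ Q,
   where Q is the second-order (Lorentz) cone in ℝ × ℝᵐ. -/

noncomputable section
open scoped RealInnerProductSpace Classical Topology
open Metric Set Filter

namespace SOCP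

abbrev E (n : ℕ) := EuclideanSpace ℝ (Fin n)

variable {n m : ℕ}

/-- Euclidean inner product on ℝ × ℝᵐ. -/
def pdot (a b : ℝ × E m) : ℝ := a.1 * b.1 + ⟪a.2, b.2⟫

/-- Euclidean norm on ℝ × ℝᵐ. -/
def pnorm (a : ℝ × E m) : ℝ := Real.sqrt (a.1 ^ 2 + ‖a.2‖ ^ 2)

/-- Membership in the second-order cone Q. -/
def inQ (q : ℝ × E m) : Prop := ‖q.2‖ ≤ q.1

/-- Membership in the dual cone Q*. -/
def inQdual (l : ℝ × E m) : Prop := ‖l.2‖ ≤ -l.1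

/-- Euclidean distance from q to the cone Q. -/
def distQ (q : ℝ × E m) : ℝ :=
  sInf {d : ℝ | ∃ p : ℝ × E m, inQ p ∧ d = pnorm (q.1 - p.1, q.2 - p.2)}

/-- The (limiting) normal cone to Q at a point q ∈ Q. -/
def NQ (q : ℝ × E m) : Set (ℝ × E m) :=
  if q = 0 then {l | inQdual l}
  else if ‖q.2‖ < q.1 then {0}
  else {l | ∃ α : ℝ, 0 ≤ α ∧ l = (-α, (α / ‖q.2‖) • q.2)}

variable (f g₀ : E n → ℝ) (gr : E n → E m)

/-- The constraint set Γ = g⁻¹(Q). -/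
def Gamma : Set (E n) := {x | ‖gr x‖ ≤ g₀ x}

/-- The Jacobian ∇g(x) applied to u, as an element of ℝ × ℝᵐ. -/
def Dg (x u : E n) : ℝ × E m := (fderiv ℝ g₀ x u, fderiv ℝ gr x u)

/-- Second derivative ∇²h(x)(v,u). -/
def D2 {G : Type*} [NormedAddCommGroup G] [NormedSpace ℝ G]
    (h : E n → G) (x v u : E n) : G :=
  fderiv ℝ (fderiv ℝ h) x v u

/-- Second derivative of g: ∇²g(x)(v,u) ∈ ℝ × ℝᵐ. -/
def D2g (x v u : E n) : ℝ × E m := (D2 g₀ x v u, D2 gr x v u)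

/-- The tangent cone T_Γ(x) (under MSCQ). -/
def TGamma (x : E n) : Set (E n) :=
  if (g₀ x, gr x) = (0 : ℝ × E m) then {u | inQ (Dg g₀ gr x u)}
  else if ‖gr x‖ < g₀ x then univ
  else {u | ⟪gr x, fderiv ℝ gr x u⟫ / ‖gr x‖ - fderiv ℝ g₀ x u ≤ 0}

/-- The critical cone K_Γ(x, x*). -/
def KGamma (x xs : E n) : Set (E n) := {u | u ∈ TGamma g₀ gr x ∧ ⟪xs, u⟫ = 0}

/-- The multiplier set Λ(x, x*) = {λ ∈ N_Q(g(x)) : ∇g(x)ᵀλ = x*}. -/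
def Lambda (x xs : E n) : Set (ℝ × E m) :=
  {l | l ∈ NQ (g₀ x, gr x) ∧ ∀ u : E n, pdot l (Dg g₀ gr x u) = ⟪xs, u⟫}

/-- Λ⁰(x, x*) = {0} if x* = 0, and Λ(x, x*) otherwise. -/
def Lambda0 (x xs : E n) : Set (ℝ × E m) :=
  if xs = 0 then {0} else Lambda g₀ gr x xs

/-- The curvature term ⟨H(x,λ)u, u⟩. -/
def Hq (x : E n) (l : ℝ × E m) (u : E n) : ℝ :=
  if ‖gr x‖ = g₀ x ∧ (g₀ x, gr x) ≠ (0 : ℝ × E m) then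
    (-l.1 / g₀ x) * (‖fderiv ℝ gr x u‖ ^ 2 - (fderiv ℝ g₀ x u) ^ 2)
  else 0

/-- ⟨∇²⟨λ, g⟩(x)u, u⟩. -/
def lagQuad (x : E n) (l : ℝ × E m) (u : E n) : ℝ :=
  l.1 * D2 g₀ x u u + ⟪l.2, D2 gr x u u⟫

/-- The directional multiplier set Λ(x, x*; u):
    maximizers of λ ↦ ⟨(∇²⟨λ,g⟩(x) + H(x,λ))u, u⟩ over Λ(x, x*). -/
def LambdaDir (x xs u : E n) : Set (ℝ × E m) :=
  {l | l ∈ Lambda g₀ gr x xs ∧ ∀ μ ∈ Lambda g₀ gr x xs,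
    lagQuad g₀ gr x μ u + Hq g₀ gr x μ u ≤ lagQuad g₀ gr x l u + Hq g₀ gr x l u}

/-- ⟨(∇²f(x) + ∇²⟨λ, g⟩(x))u, u⟩. -/
def quad (x : E n) (l : ℝ × E m) (u : E n) : ℝ :=
  D2 f x u u + lagQuad g₀ gr x l u

/-- ⟨(∇²f(x) + ∇²⟨λ, g⟩(x) + H(x,λ))u, u⟩. -/
def fullQuad (x : E n) (l : ℝ × E m) (u : E n) : ℝ :=
  D2 f x u u + lagQuad g₀ gr x l u + Hq g₀ gr x l u

/-- The metric subregularity constraint qualification with modulus σ. -/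
def MSCQ (xb : E n) (σ : ℝ) : Prop :=
  ∃ U ∈ 𝓝 xb, ∀ x ∈ U, infDist x (Gamma g₀ gr) ≤ σ * distQ (g₀ x, gr x)

/-- xb is a stationary point: Λ(xb, −∇f(xb)) ≠ ∅. -/
def Stationary (xb : E n) : Prop :=
  (Lambda g₀ gr xb (-gradient f xb)).Nonempty

/-- xb is a tilt-stable local minimizer of f over Γ with modulus κ: for some γ > 0, the
    argmin mapping M_γ is single-valued and κ-Lipschitz on a neighborhood of 0 with M_γ(0) = xb. -/
def TiltStable (xb : E n) (κ : ℝ) : Prop :=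
  ∃ γ > (0 : ℝ), ∃ V ∈ 𝓝 (0 : E n), ∃ M : E n → E n,
    M 0 = xb ∧
    (∀ v ∈ V, {x | x ∈ Gamma g₀ gr ∧ ‖x - xb‖ ≤ γ ∧
        ∀ y ∈ Gamma g₀ gr, ‖y - xb‖ ≤ γ → f x - ⟪v, x⟫ ≤ f y - ⟪v, y⟫} = {M v}) ∧
    ∀ v ∈ V, ∀ w ∈ V, ‖M v - M w‖ ≤ κ * ‖v - w‖

/-- The exact bound of tilt stability tilt(f + δ_Γ, xb). -/
def tiltBound (xb : E n) : ℝ :=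
  sInf {κ : ℝ | 0 < κ ∧ TiltStable f g₀ gr xb κ}

/-- The objective of the infimum defining ρ(u, λ, v). -/
def rhoObj (xb u : E n) (l : ℝ × E m) (v z : E n) : ℝ :=
  -l.1 * (‖fderiv ℝ gr xb z + D2 gr xb v u‖ ^ 2 -
    (fderiv ℝ g₀ xb z + D2 g₀ xb v u) ^ 2)

/-- The constraint of the infimum defining ρ(u, λ, v):
    ⟨λ, ∇g(xb)z + ∇²g(xb)(v,u)⟩ = 0. -/
def rhoCon (xb u : E n) (l : ℝ × E m) (v z : E n) : Prop :=
  l.1 * (fderiv ℝ g₀ xb z + D2 g₀ xb v u) +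
    ⟪l.2, fderiv ℝ gr xb z + D2 gr xb v u⟫ = 0

/-- The constraint set defining ρ(u, λ, v) is nonempty (ρ(u, λ, v) < ∞). -/
def rhoDom (xb u : E n) (l : ℝ × E m) (v : E n) : Prop :=
  ∃ z : E n, rhoCon g₀ gr xb u l v z

/-- The infimum function ρ(u, λ, v). -/
def rho (xb u : E n) (l : ℝ × E m) (v : E n) : ℝ :=
  sInf {r : ℝ | ∃ z : E n, rhoCon g₀ gr xb u l v z ∧ r = rhoObj g₀ gr xb u l v z}

/-- Membership (u, λ, v, w) ∈ Z. -/
def inZ (xb u : E n) (l : ℝ × E m) (v w : E n) : Prop :=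
  ‖u‖ = 1 ∧ l ∈ Lambda0 g₀ gr xb (-gradient f xb) ∧ ‖v‖ = 1 ∧
  pdot l (Dg g₀ gr xb u) = 0 ∧
  l.1 * (‖fderiv ℝ gr xb u‖ ^ 2 - (fderiv ℝ g₀ xb u) ^ 2) = 0 ∧
  Dg g₀ gr xb v = 0 ∧
  l ∈ NQ (Dg g₀ gr xb w + (2⁻¹ : ℝ) • D2g g₀ gr xb v v)

/-- The adjoint Jacobian ∇g(x)ᵀ applied to λ. -/
def DgAdj (x : E n) (l : ℝ × E m) : E n :=
  l.1 • gradient g₀ x + ContinuousLinearMap.adjoint (fderiv ℝ gr x) l.2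

/-- ∇ĝ(xb)ub where ĝ = (−g₀, g_r). -/
def ghat (xb ub : E n) : ℝ × E m := (-(fderiv ℝ g₀ xb ub), fderiv ℝ gr xb ub)

/-- The multiplier λ̄ = (‖∇f(xb)‖ / ‖∇g(xb)ᵀ∇ĝ(xb)ub‖)·∇ĝ(xb)ub. -/
def lambdaBar (xb ub : E n) : ℝ × E m :=
  (‖gradient f xb‖ / ‖DgAdj g₀ gr xb (ghat g₀ gr xb ub)‖) • ghat g₀ gr xb ub

/-- g is 2-regular at xb in the direction v. -/
def TwoRegular (xb v : E n) : Prop :=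
  ∀ p : ℝ × E m, ∃ z w : E n,
    Dg g₀ gr xb z + D2g g₀ gr xb v w = p ∧ Dg g₀ gr xb w = 0

/-- The constant χ₁. -/
def chi1 (xb : E n) : ℝ :=
  sInf {r : ℝ | ∃ u ∈ KGamma g₀ gr xb (-gradient f xb), ‖u‖ = 1 ∧
    ∃ l ∈ LambdaDir g₀ gr xb (-gradient f xb) u, r = quad f g₀ gr xb l u}

/-- The constant χ₂. -/
def chi2 (xb : E n) : ℝ :=
  sInf {r : ℝ | ∃ (u : E n) (l : ℝ × E m) (v w : E n),
    inZ f g₀ gr xb u l v w ∧ rhoDom g₀ gr xb u l v ∧ rho g₀ gr xb u l v = 0 ∧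
    r = quad f g₀ gr xb l u}

/-- The constant χ₃. -/
def chi3 (xb : E n) : ℝ :=
  sInf {r : ℝ | ∃ (u : E n) (l : ℝ × E m) (v w : E n),
    inZ f g₀ gr xb u l v w ∧
    Dg g₀ gr xb w + (2⁻¹ : ℝ) • D2g g₀ gr xb v v ≠ 0 ∧
    rhoDom g₀ gr xb u l v ∧
    r = quad f g₀ gr xb l u +
      rho g₀ gr xb u l v / (fderiv ℝ g₀ xb w + (2⁻¹ : ℝ) * D2 g₀ xb v v)}
/-- Lemma: curvature mapping on critical directions.
For x ∈ Γ, λ ∈ Λ(x, x*), and u ∈ K_Γ(x, x*) one has ⟨H(x,λ)u, u⟩ ≥ 0. -/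
theorem curvature_nonneg_on_critical_directions {n m : ℕ}
    (g₀ : E n → ℝ) (gr : E n → E m) (x : E n)
    (hg₀ : ContDiffAt ℝ 2 g₀ x) (hgr : ContDiffAt ℝ 2 gr x)
    (hx : x ∈ Gamma g₀ gr) (xs : E n)
    (l : ℝ × E m) (hl : l ∈ Lambda g₀ gr x xs)
    (u : E n) (hu : u ∈ KGamma g₀ gr x xs) :
    0 ≤ Hq g₀ gr x l u := by
  unfold Hq
  split_ifs with h
  · obtain ⟨h1, h2⟩ := h
    have hgrne : gr x ≠ 0 := by
      intro h0
      apply h2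
      have hg0 : g₀ x = 0 := by rw [← h1, h0, norm_zero]
      simp [Prod.ext_iff, hg0, h0]
    have hgpos : 0 < g₀ x := h1 ▸ norm_pos_iff.mpr hgrne
    obtain ⟨hlN, hleq⟩ := hl
    unfold NQ at hlN
    rw [if_neg h2, if_neg (by rw [h1]; exact lt_irrefl _)] at hlN
    obtain ⟨α, hα, hl'⟩ := hlN
    rcases eq_or_lt_of_le hα with h0 | hpos
    · rw [hl']
      simp [← h0]
    · have key := hleq u
      rw [hu.2, hl'] at key
      unfold pdot Dg at key
      simp only at key
      rw [real_inner_smul_left] at key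
      set a := fderiv ℝ g₀ x u with ha
      set b := fderiv ℝ gr x u with hb
      have hnz : (0:ℝ) < ‖gr x‖ := norm_pos_iff.mpr hgrne
      set c := (⟪gr x, b⟫ : ℝ) with hc
      have hip : c = ‖gr x‖ * a := by
        have h' : α / ‖gr x‖ * c = α * a := by linarith
        have h2 : α * c = α * (‖gr x‖ * a) := by
          calc α * c = ‖gr x‖ * (α / ‖gr x‖ * c) := by field_simp
          _ = ‖gr x‖ * (α * a) := by rw [h']
          _ = α * (‖gr x‖ * a) := by ring
        exact mul_left_cancel₀ (ne_of_gt hpos) h2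
      have hcs : |c| ≤ ‖gr x‖ * ‖b‖ := abs_real_inner_le_norm _ _
      have habs : ‖gr x‖ * |a| ≤ ‖gr x‖ * ‖b‖ := by
        calc ‖gr x‖ * |a| = |‖gr x‖ * a| := by rw [abs_mul, abs_of_pos hnz]
        _ = |c| := by rw [hip]
        _ ≤ ‖gr x‖ * ‖b‖ := hcs
      have h2' : |a| ≤ ‖b‖ := le_of_mul_le_mul_left habs hnz
      have hsq : a ^ 2 ≤ ‖b‖ ^ 2 := by
        have := sq_abs a
        nlinarith [abs_nonneg a, norm_nonneg b]
      rw [hl']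
      simp only [neg_neg]
      exact mul_nonneg (div_nonneg hα hgpos.le) (by linarith)
  · exact le_refl _

end SOCP
end
end

section
/- Assume MSCQ holds at x̄ ∈ Γ with modulus σ > 0 and f is C²-smooth around x̄. Let x_k ∈ Γ with x_k → x̄, x_k* → 0, λᵏ → λ̃, and u_k → ũ be convergent sequences such that for all k: λᵏ ∈ Λ(x_k, x_k* − ∇f(x_k); u_k) with ‖λᵏ‖ ≤ σ‖x_k* − ∇f(x_k)‖, u_k ∈ K_Γ(x_k, x_k* − ∇f(x_k)) with ‖u_k‖ = 1, and limsup_{k→∞} ⟨H(x_k, λᵏ)u_k, u_k⟩ < ∞. Then: λ̃ ∈ Λ(x̄, −∇f(x̄)) with ‖λ̃‖ ≤ σ‖∇f(x̄)‖, λ̃ ∈ Λ⁰(x̄, −∇f(x̄)), ‖ũ‖ = 1, ⟨λ̃, ∇g(x̄)ũ⟩ = 0, and λ̃₀·(‖∇g_r(x̄)ũ‖² − (∇g₀(x̄)ũ)²) = 0. -/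
/- Common setting for tilt stability in second-order cone programming (SOCP):
   minimize f(x) subject to g(x) = (g₀(x), g_r(x)) ∈ Q,
   where Q is the second-order (Lorentz) cone in ℝ × ℝᵐ. -/

noncomputable section
open scoped RealInnerProductSpace Classical Topology
open Metric Set Filter

namespace SOCP

variable {n m : ℕ}

variable (f g₀ : E n → ℝ) (gr : E n → E m)

lemma inQdual_of_mem_NQ {m : ℕ} {q l : ℝ × E m} (hq : inQ q) (hl : l ∈ NQ q) :
    inQdual l := by
  unfold NQ at hl
  split_ifs at hl with h1 h2
  · exact hl
  · rw [Set.mem_singleton_iff] at hl; subst hl; simp [inQdual]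
  · obtain ⟨α, hα, rfl⟩ := hl
    have heq : ‖q.2‖ = q.1 := le_antisymm hq (not_lt.1 h2)
    have hq2 : q.2 ≠ 0 := by
      intro h
      apply h1
      have h0 : q.1 = 0 := by rw [← heq, h, norm_zero]
      exact Prod.ext_iff.2 ⟨h0, h⟩
    have hpos : 0 < ‖q.2‖ := norm_pos_iff.2 hq2
    show ‖(α / ‖q.2‖) • q.2‖ ≤ -(-α)
    rw [norm_smul, Real.norm_eq_abs, abs_of_nonneg (div_nonneg hα hpos.le),
      div_mul_cancel₀ _ hpos.ne', neg_neg]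

set_option maxHeartbeats 1000000 in
/-- Lemma: limiting procedure. -/
theorem limiting_procedure {n m : ℕ}
    (f g₀ : E n → ℝ) (gr : E n → E m) (xb : E n) (σ : ℝ) (hσ : 0 < σ)
    (hf : ContDiffAt ℝ 2 f xb) (hg₀ : ContDiffAt ℝ 2 g₀ xb) (hgr : ContDiffAt ℝ 2 gr xb)
    (hb0 : g₀ xb = 0) (hbr : gr xb = 0)
    (hmscq : MSCQ g₀ gr xb σ)
    (x xs : ℕ → E n) (lam : ℕ → ℝ × E m) (u : ℕ → E n)
    (hxΓ : ∀ k, x k ∈ Gamma g₀ gr)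
    (hx : Tendsto x atTop (𝓝 xb)) (hxs : Tendsto xs atTop (𝓝 0))
    (ltilde : ℝ × E m) (hlam : Tendsto lam atTop (𝓝 ltilde))
    (ut : E n) (hu : Tendsto u atTop (𝓝 ut))
    (hlmem : ∀ k, lam k ∈ LambdaDir g₀ gr (x k) (xs k - gradient f (x k)) (u k))
    (hlnorm : ∀ k, pnorm (lam k) ≤ σ * ‖xs k - gradient f (x k)‖)
    (humem : ∀ k, u k ∈ KGamma g₀ gr (x k) (xs k - gradient f (x k)))
    (hunorm : ∀ k, ‖u k‖ = 1)
    (hbdd : ∃ C : ℝ, ∀ k, Hq g₀ gr (x k) (lam k) (u k) ≤ C) :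
    ltilde ∈ Lambda g₀ gr xb (-gradient f xb) ∧
    pnorm ltilde ≤ σ * ‖gradient f xb‖ ∧
    ltilde ∈ Lambda0 g₀ gr xb (-gradient f xb) ∧
    ‖ut‖ = 1 ∧
    pdot ltilde (Dg g₀ gr xb ut) = 0 ∧
    ltilde.1 * (‖fderiv ℝ gr xb ut‖ ^ 2 - (fderiv ℝ g₀ xb ut) ^ 2) = 0 := by
  -- continuity facts
  have hg₀c : ContinuousAt g₀ xb := hg₀.continuousAt
  have hDg₀ : ContinuousAt (fderiv ℝ g₀) xb :=
    (hg₀.fderiv_right (m := 1) (by norm_num)).continuousAt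
  have hDgr : ContinuousAt (fderiv ℝ gr) xb :=
    (hgr.fderiv_right (m := 1) (by norm_num)).continuousAt
  have hgradf : ContinuousAt (gradient f) xb := by
    have h1 : ContinuousAt (fderiv ℝ f) xb :=
      (hf.fderiv_right (m := 1) (by norm_num)).continuousAt
    have h2 : gradient f = fun y => (InnerProductSpace.toDual ℝ _).symm (fderiv ℝ f y) := rfl
    rw [h2]
    exact ((InnerProductSpace.toDual ℝ _).symm.continuous.continuousAt).comp h1
  set ys : ℕ → E n := fun k => xs k - gradient f (x k) with hys_def
  have hgradfk : Tendsto (fun k => gradient f (x k)) atTop (𝓝 (gradient f xb)) :=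
    hgradf.tendsto.comp hx
  have hys : Tendsto ys atTop (𝓝 (-gradient f xb)) := by
    have h := hxs.sub hgradfk
    simpa using h
  have hlam1 : Tendsto (fun k => (lam k).1) atTop (𝓝 ltilde.1) :=
    (continuous_fst.tendsto _).comp hlam
  have hlam2 : Tendsto (fun k => (lam k).2) atTop (𝓝 ltilde.2) :=
    (continuous_snd.tendsto _).comp hlam
  have hA0 : Tendsto (fun k => fderiv ℝ g₀ (x k)) atTop (𝓝 (fderiv ℝ g₀ xb)) :=
    hDg₀.tendsto.comp hx
  have hAr : Tendsto (fun k => fderiv ℝ gr (x k)) atTop (𝓝 (fderiv ℝ gr xb)) :=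
    hDgr.tendsto.comp hx
  have happ0 : ∀ (v : ℕ → E n) (vt : E n), Tendsto v atTop (𝓝 vt) →
      Tendsto (fun k => fderiv ℝ g₀ (x k) (v k)) atTop (𝓝 (fderiv ℝ g₀ xb vt)) := fun v vt hv =>
    (isBoundedBilinearMap_apply.continuous.tendsto _).comp (hA0.prodMk_nhds hv)
  have happr : ∀ (v : ℕ → E n) (vt : E n), Tendsto v atTop (𝓝 vt) →
      Tendsto (fun k => fderiv ℝ gr (x k) (v k)) atTop (𝓝 (fderiv ℝ gr xb vt)) := fun v vt hv =>
    (isBoundedBilinearMap_apply.continuous.tendsto _).comp (hAr.prodMk_nhds hv)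
  -- dual cone membership
  have hlm : ∀ k, lam k ∈ Lambda g₀ gr (x k) (ys k) := fun k => (hlmem k).1
  have hnq : ∀ k, lam k ∈ NQ (g₀ (x k), gr (x k)) := fun k => (hlm k).1
  have hlmeq : ∀ k, ∀ u' : E n, pdot (lam k) (Dg g₀ gr (x k) u') = ⟪ys k, u'⟫ :=
    fun k => (hlm k).2
  have hQx : ∀ k, inQ (g₀ (x k), gr (x k)) := fun k => hxΓ k
  have htg : ∀ k, u k ∈ TGamma g₀ gr (x k) := fun k => (humem k).1
  have hucomp : ∀ k, (⟪ys k, u k⟫ : ℝ) = 0 := fun k => (humem k).2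
  have hdualk : ∀ k, inQdual (lam k) := fun k =>
    inQdual_of_mem_NQ (hQx k) (hnq k)
  have hdual : inQdual ltilde := by
    have h2 : Tendsto (fun k => ‖(lam k).2‖) atTop (𝓝 ‖ltilde.2‖) := hlam2.norm
    have h1 : Tendsto (fun k => -(lam k).1) atTop (𝓝 (-ltilde.1)) := hlam1.neg
    exact le_of_tendsto_of_tendsto' h2 h1 hdualk
  -- key linear identity
  have hkey : ∀ u' : E n, pdot ltilde (Dg g₀ gr xb u') = ⟪-gradient f xb, u'⟫ := by
    intro u'
    have hL : Tendsto (fun k => pdot (lam k) (Dg g₀ gr (x k) u')) atTop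
        (𝓝 (pdot ltilde (Dg g₀ gr xb u'))) := by
      simp only [pdot, Dg]
      exact (hlam1.mul (happ0 _ _ tendsto_const_nhds)).add
        (hlam2.inner (happr _ _ tendsto_const_nhds))
    have hR : Tendsto (fun k => (⟪ys k, u'⟫ : ℝ)) atTop (𝓝 ⟪-gradient f xb, u'⟫) :=
      hys.inner tendsto_const_nhds
    have heq : (fun k => pdot (lam k) (Dg g₀ gr (x k) u')) = fun k => (⟪ys k, u'⟫ : ℝ) :=
      funext fun k => hlmeq k u'
    rw [heq] at hL
    exact tendsto_nhds_unique hL hR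
  have hc1 : ltilde ∈ Lambda g₀ gr xb (-gradient f xb) := by
    refine ⟨?_, hkey⟩
    have hz : (g₀ xb, gr xb) = (0 : ℝ × E m) := by
      rw [hb0, hbr]; rfl
    unfold NQ
    rw [if_pos hz]
    exact hdual
  -- norm bound
  have hns : Tendsto (fun k => σ * ‖ys k‖) atTop (𝓝 (σ * ‖gradient f xb‖)) := by
    have h := hys.norm
    rw [norm_neg] at h
    exact tendsto_const_nhds.mul h
  have hpn : Tendsto (fun k => pnorm (lam k)) atTop (𝓝 (pnorm ltilde)) := by
    simp only [pnorm]
    exact (Real.continuous_sqrt.tendsto _).comp ((hlam1.pow 2).add (hlam2.norm.pow 2))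
  have hc2 : pnorm ltilde ≤ σ * ‖gradient f xb‖ :=
    le_of_tendsto_of_tendsto' hpn hns hlnorm
  -- Lambda0
  have hc3 : ltilde ∈ Lambda0 g₀ gr xb (-gradient f xb) := by
    unfold Lambda0
    split_ifs with h
    · have hg0 : gradient f xb = 0 := by simpa using h
      have hle : pnorm ltilde ≤ 0 := by
        rw [hg0] at hc2; simpa using hc2
      have hpe : pnorm ltilde = 0 := le_antisymm hle (Real.sqrt_nonneg _)
      have hs : ltilde.1 ^ 2 + ‖ltilde.2‖ ^ 2 ≤ 0 := Real.sqrt_eq_zero'.1 hpe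
      have h1 : ltilde.1 = 0 := by nlinarith [sq_nonneg ltilde.1, sq_nonneg ‖ltilde.2‖]
      have h2 : ltilde.2 = 0 := by
        have hn2 : ‖ltilde.2‖ = 0 := by nlinarith [sq_nonneg ltilde.1, norm_nonneg ltilde.2]
        exact norm_eq_zero.1 hn2
      simp [Set.mem_singleton_iff, Prod.ext_iff, h1, h2]
    · exact hc1
  -- norm of ut
  have hc4 : ‖ut‖ = 1 := by
    have h1 : Tendsto (fun k => ‖u k‖) atTop (𝓝 ‖ut‖) := hu.norm
    have h2 : Tendsto (fun k => ‖u k‖) atTop (𝓝 1) := by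
      simp only [hunorm]; exact tendsto_const_nhds
    exact tendsto_nhds_unique h1 h2
  -- complementarity
  have hinner0 : (⟪-gradient f xb, ut⟫ : ℝ) = 0 := by
    have h1 : Tendsto (fun k => (⟪ys k, u k⟫ : ℝ)) atTop (𝓝 ⟪-gradient f xb, ut⟫) :=
      hys.inner hu
    have h2 : Tendsto (fun k => (⟪ys k, u k⟫ : ℝ)) atTop (𝓝 0) := by
      have heq : (fun k => (⟪ys k, u k⟫ : ℝ)) = fun _ => (0 : ℝ) :=
        funext fun k => hucomp k
      rw [heq]; exact tendsto_const_nhds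
    exact tendsto_nhds_unique h1 h2
  have hc5 : pdot ltilde (Dg g₀ gr xb ut) = 0 := by rw [hkey ut, hinner0]
  refine ⟨hc1, hc2, hc3, hc4, hc5, ?_⟩
  -- last claim
  by_cases hl0 : ltilde.1 = 0
  · rw [hl0, zero_mul]
  have hneg : ltilde.1 < 0 := by
    have h0 : 0 ≤ -ltilde.1 := le_trans (norm_nonneg _) hdual
    rcases lt_or_eq_of_le (by linarith : ltilde.1 ≤ 0) with h | h
    · exact h
    · exact absurd h hl0
  set a := fderiv ℝ g₀ xb ut with ha_def
  set b := fderiv ℝ gr xb ut with hb_def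
  have hpd : ltilde.1 * a + ⟪ltilde.2, b⟫ = 0 := hc5
  have habs : |a| ≤ ‖b‖ := by
    have h1 : (-ltilde.1) * a = ⟪ltilde.2, b⟫ := by linarith
    have h3 : (-ltilde.1) * |a| ≤ (-ltilde.1) * ‖b‖ := by
      calc (-ltilde.1) * |a| = |(-ltilde.1) * a| := by
            rw [abs_mul, abs_of_pos (by linarith : (0:ℝ) < -ltilde.1)]
        _ = |(⟪ltilde.2, b⟫ : ℝ)| := by rw [h1]
        _ ≤ ‖ltilde.2‖ * ‖b‖ := abs_real_inner_le_norm _ _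
        _ ≤ (-ltilde.1) * ‖b‖ := mul_le_mul_of_nonneg_right hdual (norm_nonneg _)
    exact le_of_mul_le_mul_left h3 (by linarith)
  have hle1 : a ^ 2 ≤ ‖b‖ ^ 2 := by
    rw [← sq_abs a]
    exact pow_le_pow_left₀ (abs_nonneg a) habs 2
  have hle2 : ‖b‖ ^ 2 ≤ a ^ 2 := by
    by_contra hcon
    push_neg at hcon
    set ε := ‖b‖ ^ 2 - a ^ 2 with hε
    have hεpos : 0 < ε := by simp only [hε]; linarith
    obtain ⟨C, hC⟩ := hbdd
    set D := max C 1 with hD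
    have hDpos : (0:ℝ) < D := lt_of_lt_of_le one_pos (le_max_right _ _)
    set δ := ((-ltilde.1) / 2 * (ε / 2)) / (2 * D) with hδ
    have hδpos : 0 < δ := by
      apply div_pos (mul_pos (by linarith) (by linarith)) (by linarith)
    have hδeq : 2 * D * δ = (-ltilde.1) / 2 * (ε / 2) := by
      rw [hδ]; field_simp
    have hE1 : ∀ᶠ k in atTop, (lam k).1 < ltilde.1 / 2 :=
      hlam1.eventually_lt_const (by linarith)
    have hsk : Tendsto (fun k => ‖fderiv ℝ gr (x k) (u k)‖ ^ 2 -
        (fderiv ℝ g₀ (x k) (u k)) ^ 2) atTop (𝓝 ε) :=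
      (((happr u ut hu).norm.pow 2).sub ((happ0 u ut hu).pow 2))
    have hE2 : ∀ᶠ k in atTop, ε / 2 < ‖fderiv ℝ gr (x k) (u k)‖ ^ 2 -
        (fderiv ℝ g₀ (x k) (u k)) ^ 2 :=
      hsk.eventually_const_lt (by linarith)
    have hg0k : Tendsto (fun k => g₀ (x k)) atTop (𝓝 0) := by
      have h := hg₀c.tendsto.comp hx
      rwa [hb0] at h
    have hE3 : ∀ᶠ k in atTop, g₀ (x k) < δ := hg0k.eventually_lt_const hδpos
    obtain ⟨k, h1, h2, h3⟩ := (hE1.and (hE2.and hE3)).exists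
    set ak := fderiv ℝ g₀ (x k) (u k) with hak_def
    set bk := fderiv ℝ gr (x k) (u k) with hbk_def
    by_cases hz : (g₀ (x k), gr (x k)) = (0 : ℝ × E m)
    · have ht := htg k
      unfold TGamma at ht
      rw [if_pos hz] at ht
      have hbak : ‖bk‖ ≤ ak := ht
      nlinarith [norm_nonneg bk]
    · by_cases hint : ‖gr (x k)‖ < g₀ (x k)
      · have hn := hnq k
        unfold NQ at hn
        rw [if_neg hz, if_pos hint] at hn
        rw [Set.mem_singleton_iff] at hn
        rw [hn] at h1
        simp only [Prod.fst_zero] at h1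
        linarith
      · have heq2 : ‖gr (x k)‖ = g₀ (x k) := le_antisymm (hxΓ k) (not_lt.1 hint)
        have hg0pos : 0 < g₀ (x k) := by
          rcases (norm_nonneg (gr (x k))).lt_or_eq with h' | h'
          · rwa [heq2] at h'
          · exfalso
            apply hz
            have hgr0 : gr (x k) = 0 := norm_eq_zero.1 h'.symm
            have hg00 : g₀ (x k) = 0 := by rw [← heq2, ← h']
            exact Prod.ext_iff.2 ⟨hg00, hgr0⟩
        have hHq : Hq g₀ gr (x k) (lam k) (u k) =
            (-(lam k).1 / g₀ (x k)) * (‖bk‖ ^ 2 - ak ^ 2) := by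
          unfold Hq
          rw [if_pos ⟨heq2, hz⟩]
        have hA : (-(lam k).1) * (‖bk‖ ^ 2 - ak ^ 2) ≤ C * g₀ (x k) := by
          have h' := hC k
          rw [hHq, div_mul_eq_mul_div, div_le_iff₀ hg0pos] at h'
          exact h'
        have f1 : (-ltilde.1) / 2 * (ε / 2) ≤ (-(lam k).1) * (‖bk‖ ^ 2 - ak ^ 2) := by
          apply mul_le_mul (by linarith) h2.le (by linarith) (by linarith)
        have f2 : C * g₀ (x k) ≤ D * g₀ (x k) :=
          mul_le_mul_of_nonneg_right (le_max_left C 1) hg0pos.le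
        have f3 : D * g₀ (x k) < D * δ := mul_lt_mul_of_pos_left h3 hDpos
        have f4 : (0:ℝ) ≤ D * δ := le_of_lt (mul_pos hDpos hδpos)
        linarith
  have : ‖b‖ ^ 2 - a ^ 2 = 0 := by linarith
  rw [this, mul_zero]


end SOCP
end
end

section
/- Let x̄ ∈ Γ with g(x̄) = 0, let Λ(x̄, −∇f(x̄)) ≠ ∅, and suppose there exists ū ∈ K_Γ(x̄, −∇f(x̄)) with ∇g(x̄)ū ≠ 0. Then Λ⁰(x̄, −∇f(x̄)) = {λ̄}, where λ̄ := (‖∇f(x̄)‖/‖∇g(x̄)ᵀ∇ĝ(x̄)ū‖)·∇ĝ(x̄)ū with ĝ := (−g₀, g_r). In particular, if ∇f(x̄) ≠ 0 then the whole multiplier set Λ(x̄, −∇f(x̄)) is the singleton {λ̄}. -/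
/- Common setting for tilt stability in second-order cone programming (SOCP):
   minimize f(x) subject to g(x) = (g₀(x), g_r(x)) ∈ Q,
   where Q is the second-order (Lorentz) cone in ℝ × ℝᵐ. -/

noncomputable section
open scoped RealInnerProductSpace Classical Topology
open Metric Set Filter

namespace SOCP

variable {n m : ℕ}

variable (f g₀ : E n → ℝ) (gr : E n → E m)

/-- uniqueness of the multiplier in the out-of-kernel case:
Λ⁰(xb, −∇f(xb)) = {λ̄}, and Λ(xb, −∇f(xb)) = {λ̄} whenever ∇f(xb) ≠ 0. -/
theorem multiplier_unique_out_of_kernel {n m : ℕ}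
    (f g₀ : E n → ℝ) (gr : E n → E m) (xb : E n)
    (hf : ContDiffAt ℝ 2 f xb) (hg₀ : ContDiffAt ℝ 2 g₀ xb) (hgr : ContDiffAt ℝ 2 gr xb)
    (hb0 : g₀ xb = 0) (hbr : gr xb = 0)
    (hstat : Stationary f g₀ gr xb)
    (ub : E n) (hub : ub ∈ KGamma g₀ gr xb (-gradient f xb))
    (hubne : Dg g₀ gr xb ub ≠ 0) :
    Lambda0 g₀ gr xb (-gradient f xb) = {lambdaBar f g₀ gr xb ub} ∧
    (gradient f xb ≠ 0 →
      Lambda g₀ gr xb (-gradient f xb) = {lambdaBar f g₀ gr xb ub}) := by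
  classical
  -- abbreviations
  set a : ℝ := fderiv ℝ g₀ xb ub with ha_def
  set b : E m := fderiv ℝ gr xb ub with hb_def
  have hQ0 : (g₀ xb, gr xb) = (0 : ℝ × E m) := by rw [hb0, hbr]; rfl
  have hTg : ‖b‖ ≤ a := by
    have h1 := hub.1
    rw [TGamma, if_pos hQ0] at h1
    exact h1
  have horth : ⟪-gradient f xb, ub⟫ = 0 := hub.2
  have hgradinner : ∀ (h : E n → ℝ) (x u : E n), ⟪gradient h x, u⟫ = fderiv ℝ h x u := by
    intro h x u
    simp [gradient, InnerProductSpace.toDual_symm_apply]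
  have hpdot : ∀ (p : ℝ × E m) (u : E n),
      pdot p (Dg g₀ gr xb u) = ⟪DgAdj g₀ gr xb p, u⟫ := by
    intro p u
    show p.1 * fderiv ℝ g₀ xb u + ⟪p.2, fderiv ℝ gr xb u⟫ = _
    rw [DgAdj, inner_add_left, real_inner_smul_left, hgradinner,
      ContinuousLinearMap.adjoint_inner_left]
  have hAdjsmul : ∀ (t : ℝ) (p : ℝ × E m),
      DgAdj g₀ gr xb (t • p) = t • DgAdj g₀ gr xb p := by
    intro t p
    simp [DgAdj, smul_smul, smul_add, map_smul]
  -- the key claim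
  have key : ∀ l ∈ Lambda g₀ gr xb (-gradient f xb), gradient f xb ≠ 0 →
      l = lambdaBar f g₀ gr xb ub := by
    intro l hl hg
    have hmem := hl.1
    rw [hQ0] at hmem
    rw [NQ, if_pos rfl] at hmem
    have hdual : ‖l.2‖ ≤ -l.1 := hmem
    have hl1le : l.1 ≤ 0 := by have := norm_nonneg l.2; linarith
    have heq : l.1 * a + ⟪l.2, b⟫ = 0 := by
      have h := hl.2 ub
      rw [horth] at h
      exact h
    have lne : l ≠ 0 := by
      intro h0
      apply hg
      have h := hl.2 (gradient f xb)
      rw [h0] at h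
      simp only [pdot, Prod.fst_zero, Prod.snd_zero, zero_mul, inner_zero_left,
        add_zero, zero_add, inner_neg_left, real_inner_self_eq_norm_sq] at h
      have : ‖gradient f xb‖ = 0 := by nlinarith [norm_nonneg (gradient f xb)]
      exact norm_eq_zero.mp this
    have hl1lt : l.1 < 0 := by
      rcases lt_or_eq_of_le hl1le with h | h
      · exact h
      · exfalso
        apply lne
        have h2 : ‖l.2‖ ≤ 0 := by rw [h] at hdual; simpa using hdual
        have h2' : l.2 = 0 := norm_eq_zero.mp (le_antisymm h2 (norm_nonneg _))
        exact Prod.ext_iff.mpr ⟨by simpa using h, by simpa using h2'⟩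
    have h1 : ⟪l.2, b⟫ ≤ ‖l.2‖ * ‖b‖ := real_inner_le_norm _ _
    have h2 : ‖l.2‖ * ‖b‖ ≤ (-l.1) * ‖b‖ := mul_le_mul_of_nonneg_right hdual (norm_nonneg _)
    have h3 : (-l.1) * ‖b‖ ≤ (-l.1) * a := mul_le_mul_of_nonneg_left hTg (by linarith)
    have e3 : (-l.1) * ‖b‖ = (-l.1) * a := by linarith
    have e2 : ‖l.2‖ * ‖b‖ = (-l.1) * ‖b‖ := by linarith
    have hba : ‖b‖ = a := mul_left_cancel₀ (by linarith : (0:ℝ) < -l.1).ne' e3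
    have hbne : b ≠ 0 := by
      intro h0
      apply hubne
      have hA : a = 0 := by rw [← hba, h0, norm_zero]
      have : Dg g₀ gr xb ub = (a, b) := rfl
      rw [this, hA, h0]
      rfl
    have hb_pos : 0 < ‖b‖ := norm_pos_iff.mpr hbne
    have ha_pos : 0 < a := hba ▸ hb_pos
    have hl2n : ‖l.2‖ = -l.1 := mul_right_cancel₀ (ne_of_gt hb_pos) e2
    have hcs : ⟪l.2, b⟫ = ‖l.2‖ * ‖b‖ := by
      rw [e2, e3]; linarith
    have hsc : ‖b‖ • l.2 = ‖l.2‖ • b := inner_eq_norm_mul_iff_real.mp hcs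
    set t : ℝ := (-l.1) / a with ht_def
    have ht_pos : 0 < t := div_pos (by linarith) ha_pos
    have hl2 : l.2 = t • b := by
      rw [hba, hl2n] at hsc
      have := congrArg (fun z => a⁻¹ • z) hsc
      simp only [smul_smul, inv_mul_cancel₀ (ne_of_gt ha_pos), one_smul] at this
      rw [this, ht_def, div_eq_inv_mul, mul_comm, mul_smul]
    have hlt : l = t • ghat g₀ gr xb ub := by
      apply Prod.ext
      · show l.1 = t * (-(a))
        rw [ht_def]
        field_simp
      · show l.2 = t • b
        exact hl2
    -- identify t
    set Adj : E n := DgAdj g₀ gr xb (ghat g₀ gr xb ub) with hAdj_def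
    have heqf : t • Adj = -gradient f xb := by
      apply ext_inner_right ℝ
      intro u
      have h := hl.2 u
      rw [hpdot l u, hlt, hAdjsmul] at h
      exact h
    have hAdjne : Adj ≠ 0 := by
      intro h0
      apply hg
      rw [h0, smul_zero] at heqf
      simpa using heqf.symm
    have hnorm : t * ‖Adj‖ = ‖gradient f xb‖ := by
      have := congrArg norm heqf
      rwa [norm_smul, norm_neg, Real.norm_eq_abs, abs_of_pos ht_pos] at this
    have htval : t = ‖gradient f xb‖ / ‖Adj‖ := by
      field_simp [ne_of_gt (norm_pos_iff.mpr hAdjne)] at hnorm ⊢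
      linarith
    rw [hlt, htval]
    rfl
  constructor
  · by_cases hg : gradient f xb = 0
    · rw [Lambda0, if_pos (by rw [hg, neg_zero])]
      have : lambdaBar f g₀ gr xb ub = 0 := by
        rw [lambdaBar, hg]
        simp
      rw [this]
    · rw [Lambda0, if_neg (by simpa using hg)]
      obtain ⟨l0, hl0⟩ := hstat
      have hl0eq := key l0 hl0 hg
      ext l
      constructor
      · intro hl
        exact key l hl hg
      · intro hl
        rw [Set.mem_singleton_iff] at hl
        rw [hl, ← hl0eq]
        exact hl0
  · intro hg
    obtain ⟨l0, hl0⟩ := hstat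
    have hl0eq := key l0 hl0 hg
    ext l
    constructor
    · intro hl
      exact key l hl hg
    · intro hl
      rw [Set.mem_singleton_iff] at hl
      rw [hl, ← hl0eq]
      exact hl0

end SOCP
end
end
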